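/- Let K = |R| + (|R|+1)·(|S|−|R|+1). With B_M and y_T as defined for safe positive reachability, B_M^K(y_T) = SafePR_{M,T}, the vector whose s-component is the minimal d such that some strategy is d-safe in s and visits T with positive probability (equivalently, admits at least one compatible run visiting T), with ∞ if no such d exists. -/

import Mathlib

open scoped Classical NNReal ENat

noncomputable section

/-- A consumption Markov decision process. -/
structure CMDP (S A : Type) [Fintype S] where
  Δ : S → A → S → NNReal
  Δ_sum : ∀ s a, (∑ t, Δ s a t) = 1
  C : S → A → ℕ
  R : Set S
  cap : ℕ

namespace CMDP

variable {S A : Type} [Fintype S]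

/-- Strategies map histories (initial state, list of action/state steps) to actions. -/
abbrev Strat (S A : Type) : Type := S × List (A × S) → A

/-- Last state of a history. -/
def lastState (s : S) : List (A × S) → S
  | [] => s
  | (_, t) :: rest => lastState t rest

/-- The `i`-th state (0-indexed) of a history. -/
def stateAt (s : S) (steps : List (A × S)) (i : ℕ) : S :=
  (s :: steps.map Prod.snd).getD i s

variable (M : CMDP S A)

def Succ (s : S) (a : A) : Set S := {t | 0 < M.Δ s a t}

/-- Total consumption along a finite path. -/
def consAux : S → List (A × S) → ℕ
  | _, [] => 0
  | s, (a, t) :: rest => M.C s a + consAux t rest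

/-- One step of the energy-level update. -/
def levelStep (s : S) (a : A) (l : ℕ) : Option ℕ :=
  if s ∈ M.R then (if M.C s a ≤ M.cap then some (M.cap - M.C s a) else none)
  else (if M.C s a ≤ l then some (l - M.C s a) else none)

def energyFrom : Option ℕ → S → List (A × S) → Option ℕ
  | none, _, _ => none
  | some l, _, [] => some l
  | some l, s, (a, t) :: rest => energyFrom (M.levelStep s a l) t rest

/-- Energy level of a history initialized by `d` (`none` = ⊥, exhaustion). -/
def energy (d : ℕ) (s : S) (steps : List (A × S)) : Option ℕ :=
  M.energyFrom (some d) s steps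

/-- Validity of a finite path. -/
def ValidPath : S → List (A × S) → Prop
  | _, [] => True
  | s, (a, t) :: rest => t ∈ M.Succ s a ∧ ValidPath t rest

/-- First state of a run. -/
def runState (ρ : ℕ → S × A) (i : ℕ) : S := (ρ i).1

/-- The finite prefix of a run with `i` steps. -/
def prefixSteps (ρ : ℕ → S × A) (i : ℕ) : List (A × S) :=
  (List.range i).map fun k => ((ρ k).2, (ρ (k + 1)).1)

def IsRun (ρ : ℕ → S × A) : Prop := ∀ i, (ρ (i + 1)).1 ∈ M.Succ (ρ i).1 (ρ i).2

/-- A run is `d`-safe if the energy level of every finite prefix is defined. -/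
def DSafe (d : ℕ) (ρ : ℕ → S × A) : Prop :=
  ∀ i, M.energy d (runState ρ 0) (prefixSteps ρ i) ≠ none

/-- A run is compatible with a strategy. -/
def Compat (σ : Strat S A) (ρ : ℕ → S × A) : Prop :=
  M.IsRun ρ ∧ ∀ i, (ρ i).2 = σ (runState ρ 0, prefixSteps ρ i)

def CompatFrom (σ : Strat S A) (s : S) (ρ : ℕ → S × A) : Prop :=
  M.Compat σ ρ ∧ runState ρ 0 = s

/-- A strategy is `d`-safe in `s` if all compatible runs from `s` are `d`-safe. -/
def SafeStrat (σ : Strat S A) (d : ℕ) (s : S) : Prop :=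
  ∀ ρ, M.CompatFrom σ s ρ → M.DSafe d ρ

/-- A finite history compatible with a strategy. -/
def CompatHist (σ : Strat S A) (s : S) (steps : List (A × S)) : Prop :=
  M.ValidPath s steps ∧
    ∀ (i : ℕ) (h : i < steps.length), (steps.get ⟨i, h⟩).1 = σ (s, steps.take i)

def Memoryless (σ : Strat S A) : Prop :=
  ∀ h₁ h₂ : S × List (A × S), lastState h₁.1 h₁.2 = lastState h₂.1 h₂.2 → σ h₁ = σ h₂

/-- Cost of a run up to the first visit of `T` (∞ if `T` is never visited). -/
def reachCost (T : Set S) (ρ : ℕ → S × A) : ℕ∞ :=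
  ⨅ i ∈ {i : ℕ | runState ρ i ∈ T}, (M.consAux (runState ρ 0) (prefixSteps ρ i) : ℕ∞)

/-- `i`-step bounded reachability cost. -/
def reachCostBdd (T : Set S) (n : ℕ) (ρ : ℕ → S × A) : ℕ∞ :=
  ⨅ i ∈ {i : ℕ | i ≤ n ∧ runState ρ i ∈ T}, (M.consAux (runState ρ 0) (prefixSteps ρ i) : ℕ∞)

/-- Reachability cost requiring at least one step. -/
def reachCostPlus (T : Set S) (ρ : ℕ → S × A) : ℕ∞ :=
  ⨅ i ∈ {i : ℕ | 1 ≤ i ∧ runState ρ i ∈ T}, (M.consAux (runState ρ 0) (prefixSteps ρ i) : ℕ∞)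

def reachCostStrat (T : Set S) (σ : Strat S A) (s : S) : ℕ∞ :=
  ⨆ ρ ∈ {ρ | M.CompatFrom σ s ρ}, M.reachCost T ρ

def minReach (T : Set S) (s : S) : ℕ∞ :=
  ⨅ σ : Strat S A, M.reachCostStrat T σ s

def minReachBdd (T : Set S) (n : ℕ) (s : S) : ℕ∞ :=
  ⨅ σ : Strat S A, ⨆ ρ ∈ {ρ | M.CompatFrom σ s ρ}, M.reachCostBdd T n ρ

def minReachPlus (T : Set S) (s : S) : ℕ∞ :=
  ⨅ σ : Strat S A, ⨆ ρ ∈ {ρ | M.CompatFrom σ s ρ}, M.reachCostPlus T ρ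

/-- The Bellman operator for minimum cost reachability of `T`. -/
def bellman (T : Set S) (v : S → ℕ∞) : S → ℕ∞ := fun s =>
  if s ∈ T then 0 else ⨅ a : A, ((M.C s a : ℕ∞) + ⨆ t ∈ M.Succ s a, v t)

/-- The initial vector: `0` on `T`, `∞` elsewhere. -/
def xTvec (T : Set S) : S → ℕ∞ := fun s => if s ∈ T then 0 else ⊤

/-- Length of the longest simple path of `M`. -/
def longestSimple : ℕ :=
  sSup {n | ∃ (s : S) (steps : List (A × S)),
    M.ValidPath s steps ∧ (s :: steps.map Prod.snd).Nodup ∧ steps.length = n}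

/-- The augmented CMDP `M̃` with a fresh non-reload copy of every state. -/
def augment : CMDP (S ⊕ S) A where
  Δ := fun x a t =>
    Sum.elim (fun u => M.Δ (Sum.elim id id x) a u) (fun _ => (0 : NNReal)) t
  Δ_sum := by
    intro x a
    rw [Fintype.sum_sum_type]
    simp [M.Δ_sum (Sum.elim id id x) a]
  C := fun x a => M.C (Sum.elim id id x) a
  R := Sum.inl '' M.R
  cap := M.cap

/-- Truncation to `0` on reload states. -/
def strunc (x : S → ℕ∞) : S → ℕ∞ := fun s => if s ∈ M.R then 0 else x s

/-- The truncated Bellman-like operator `G`. -/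
def opG (v : S → ℕ∞) : S → ℕ∞ := fun s =>
  ⨅ a : A, ((M.C s a : ℕ∞) + ⨆ t ∈ M.Succ s a, M.strunc v t)

/-- Minimal `d ≤ cap` such that some strategy is `d`-safe in `s` (∞ if none). -/
def safeVec (s : S) : ℕ∞ :=
  ⨅ d ∈ {d : ℕ | d ≤ M.cap ∧ ∃ σ : Strat S A, M.SafeStrat σ d s}, (d : ℕ∞)

/-- An action safe in a state. -/
def SafeAction (s : S) (a : A) : Prop :=
  (s ∉ M.R ∧ ((M.C s a : ℕ∞) + ⨆ t ∈ M.Succ s a, M.safeVec t) ≤ M.safeVec s) ∨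
  (s ∈ M.R ∧ ((M.C s a : ℕ∞) + ⨆ t ∈ M.Succ s a, M.safeVec t) ≤ (M.cap : ℕ∞))

/-- A CMDP is decreasing if every (valid) simple cycle has positive consumption. -/
def Decreasing : Prop :=
  ∀ (s : S) (steps : List (A × S)), M.ValidPath s steps → steps ≠ [] →
    lastState s steps = s → (s :: (steps.map Prod.snd).dropLast).Nodup →
    0 < M.consAux s steps

/-- Selection according to a selection rule: the action of the largest
element of the domain below the counter value. -/
def selectFrom (φ : ℕ → Option A) (m : ℕ) (a₀ : A) : A :=
  (((List.range (m + 1)).reverse).findSome? φ).getD a₀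

/-- The finite counter strategy `Σ^y` induced by a counter selector. -/
def counterStrategy (sel : S → ℕ → Option A) (y : S → ℕ) (a₀ : A) : Strat S A :=
  fun h =>
    match M.energy (y h.1) h.1 h.2 with
    | some m => selectFrom (sel (lastState h.1 h.2)) m a₀
    | none => a₀

/-- The `SPR` value of an action. -/
def spr (s : S) (a : A) (x : S → ℕ∞) : ℕ∞ :=
  (M.C s a : ℕ∞) +
    ⨅ t ∈ M.Succ s a, max (x t) (⨆ t' ∈ {t' ∈ M.Succ s a | t' ≠ t}, M.safeVec t')

def opA (T : Set S) (x : S → ℕ∞) : S → ℕ∞ := fun s =>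
  if s ∈ T then M.safeVec s else ⨅ a : A, M.spr s a x

/-- Two-sided truncation. -/
def trunc2 (x : S → ℕ∞) : S → ℕ∞ := fun s =>
  if (M.cap : ℕ∞) < x s then ⊤ else if s ∈ M.R then 0 else x s

def opB (T : Set S) (x : S → ℕ∞) : S → ℕ∞ := M.trunc2 (M.opA T x)

def yTvec (T : Set S) : S → ℕ∞ := fun s => if s ∈ T then M.safeVec s else ⊤

def VisitsWithin (T : Set S) (i : ℕ) (ρ : ℕ → S × A) : Prop :=
  ∃ j ≤ i, runState ρ j ∈ T

def Visits (T : Set S) (ρ : ℕ → S × A) : Prop := ∃ j, runState ρ j ∈ T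

/-- Minimal `ℓ ≤ cap` s.t. some `ℓ`-safe strategy from `s` has a run visiting `T`
within the first `i` steps. -/
def safePRBdd (T : Set S) (i : ℕ) (s : S) : ℕ∞ :=
  ⨅ ℓ ∈ {ℓ : ℕ | ℓ ≤ M.cap ∧ ∃ σ : Strat S A, M.SafeStrat σ ℓ s ∧
      ∃ ρ, M.CompatFrom σ s ρ ∧ VisitsWithin T i ρ}, (ℓ : ℕ∞)

/-- Minimal `ℓ ≤ cap` s.t. some `ℓ`-safe strategy from `s` has a run visiting `T`. -/
def safePR (T : Set S) (s : S) : ℕ∞ :=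
  ⨅ ℓ ∈ {ℓ : ℕ | ℓ ≤ M.cap ∧ ∃ σ : Strat S A, M.SafeStrat σ ℓ s ∧
      ∃ ρ, M.CompatFrom σ s ρ ∧ Visits T ρ}, (ℓ : ℕ∞)

/-- Replace the set of reload states. -/
def setReload (R' : Set S) : CMDP S A := { M with R := R' }

/-- Probability of a finite continuation of a history under a strategy. -/
def pathProbAux (σ : Strat S A) : S × List (A × S) → List (A × S) → NNReal
  | _, [] => 1
  | h, (a, t) :: rest =>
      (if σ h = a then M.Δ (lastState h.1 h.2) a t else 0) *
        pathProbAux σ (h.1, h.2 ++ [(a, t)]) rest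

/-- Probability that the length-`n` prefix of a run from `s` under `σ`
satisfies the predicate `P`. -/
def probEvent [Fintype A] (σ : Strat S A) (s : S) (n : ℕ) (P : List (A × S) → Prop) : NNReal :=
  ∑ f : Fin n → A × S,
    if P (List.ofFn f) then M.pathProbAux σ (s, []) (List.ofFn f) else 0

/-- Number of visits of `T` along a finite path. -/
def visitCount (T : Set S) (s : S) (steps : List (A × S)) : ℕ :=
  (s :: steps.map Prod.snd).countP (fun x => decide (x ∈ T))

/-- `T` is visited infinitely often with probability one under `σ` from `s`. -/
def buchiAS [Fintype A] (σ : Strat S A) (s : S) (T : Set S) : Prop :=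
  ∀ k : ℕ,
    (⨆ n : ℕ, M.probEvent σ s n (fun steps => k ≤ visitCount T s steps)) = 1

/-- Minimal `d ≤ cap` s.t. some strategy is `d`-safe in `s` and visits `T`
infinitely often almost surely. -/
def safeBuchiVec [Fintype A] (T : Set S) (s : S) : ℕ∞ :=
  ⨅ d ∈ {d : ℕ | d ≤ M.cap ∧ ∃ σ : Strat S A, M.SafeStrat σ d s ∧ M.buchiAS σ s T}, (d : ℕ∞)

/-- Iterated memory update of a memory structure. -/
def updStar {Mem : Type} (upd : Mem → S → A → S → Mem) : Mem → S → List (A × S) → Mem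
  | m, _, [] => m
  | m, s, (a, t) :: rest => updStar upd (upd m s a t) t rest

/-- Finite-memory strategies: encodable by a finite memory structure. -/
def FinMemStrategy (σ : Strat S A) : Prop :=
  ∃ (Mem : Type) (_ : Finite Mem) (init : S → Mem) (upd : Mem → S → A → S → Mem)
    (nxt : Mem → S → A),
    ∀ h : S × List (A × S), σ h = nxt (updStar upd (init h.1) h.1 h.2) (lastState h.1 h.2)

/-- The joint run `α ⊙ ρ`. -/
def jointRun (s : S) (steps : List (A × S)) (ρ : ℕ → S × A) : ℕ → S × A :=
  fun i => if h : i < steps.length then (stateAt s steps i, (steps.get ⟨i, h⟩).1)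
           else ρ (i - steps.length)


/-! ### Auxiliary development -/

section Aux
set_option linter.unusedSectionVars false

variable {S A : Type} [Fintype S] (M : CMDP S A)

theorem succ_nonempty (s : S) (a : A) : ∃ t, t ∈ M.Succ s a := by
  by_contra h
  push_neg at h
  have h0 : (∑ t, M.Δ s a t) = 0 := by
    apply Finset.sum_eq_zero
    intro t _
    have := h t
    simp only [Succ, Set.mem_setOf_eq, not_lt] at this
    exact le_antisymm this zero_le
  rw [M.Δ_sum s a] at h0
  exact one_ne_zero h0

theorem lastState_append (s : S) (B C : List (A × S)) :
    lastState s (B ++ C) = lastState (lastState s B) C := by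
  induction B generalizing s with
  | nil => rfl
  | cons p B ih => cases p; exact ih _

theorem validPath_append (s : S) (B C : List (A × S)) :
    M.ValidPath s (B ++ C) ↔ M.ValidPath s B ∧ M.ValidPath (lastState s B) C := by
  induction B generalizing s with
  | nil => simp [ValidPath, lastState]
  | cons p B ih =>
    cases p with
    | mk a t =>
      simp only [List.cons_append, ValidPath, List.append_eq, lastState, ih, and_assoc]

theorem energyFrom_none (s : S) (L : List (A × S)) : M.energyFrom none s L = none := by
  cases L <;> rfl

theorem energyFrom_append (e : Option ℕ) (s : S) (B C : List (A × S)) :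
    M.energyFrom e s (B ++ C) = M.energyFrom (M.energyFrom e s B) (lastState s B) C := by
  induction B generalizing e s with
  | nil =>
    cases e with
    | none => simp [energyFrom_none]
    | some l => rfl
  | cons p B ih =>
    cases p with
    | mk a t =>
      cases e with
      | none => simp [energyFrom_none]
      | some l => exact ih _ _

theorem energyFrom_mono {d d' : ℕ} (hdd : d ≤ d') (s : S) (B : List (A × S)) {m : ℕ}
    (h : M.energyFrom (some d) s B = some m) :
    ∃ m', m ≤ m' ∧ M.energyFrom (some d') s B = some m' := by
  induction B generalizing d d' s with
  | nil =>
    simp only [energyFrom, Option.some.injEq] at h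
    subst h
    exact ⟨d', hdd, rfl⟩
  | cons p B ih =>
    cases p with
    | mk a t =>
      simp only [energyFrom] at h ⊢
      by_cases hs : s ∈ M.R
      · simp only [levelStep, hs, if_true] at h ⊢
        by_cases hcc : M.C s a ≤ M.cap
        · rw [if_pos hcc] at h ⊢
          exact ih le_rfl _ h
        · rw [if_neg hcc, energyFrom_none] at h; exact absurd h (by simp)
      · simp only [levelStep, hs, if_false] at h ⊢
        by_cases hc : M.C s a ≤ d
        · rw [if_pos hc] at h
          rw [if_pos (le_trans hc hdd)]
          exact ih (by omega) _ h
        · rw [if_neg hc, energyFrom_none] at h; exact absurd h (by simp)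

theorem energyFrom_mono_ne {d d' : ℕ} (hdd : d ≤ d') (s : S) (B : List (A × S))
    (h : M.energyFrom (some d) s B ≠ none) : M.energyFrom (some d') s B ≠ none := by
  obtain ⟨m, hm⟩ := Option.ne_none_iff_exists'.mp h
  obtain ⟨m', _, hm'⟩ := M.energyFrom_mono hdd s B hm
  simp [hm']

theorem energyFrom_reload_ne (x : S) (hx : x ∈ M.R) (d d' : ℕ) (B : List (A × S))
    (h : M.energyFrom (some d) x B ≠ none) : M.energyFrom (some d') x B ≠ none := by
  cases B with
  | nil => simp [energyFrom]
  | cons p B =>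
    cases p with
    | mk a t =>
      simp only [energyFrom] at h ⊢
      have : M.levelStep x a d = M.levelStep x a d' := by simp [levelStep, hx]
      rwa [← this]

/-- All step sources along a path are non-reload states. -/
def SrcNR : S → List (A × S) → Prop
  | _, [] => True
  | x, (_, u) :: rest => x ∉ M.R ∧ SrcNR u rest

theorem energyFrom_srcNR_le (x : S) (B : List (A × S)) (hB : M.SrcNR x B) {d m : ℕ}
    (h : M.energyFrom (some d) x B = some m) : m ≤ d := by
  induction B generalizing x d with
  | nil => simp only [energyFrom] at h; cases h; rfl
  | cons p B ih =>
    cases p with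
    | mk a t =>
      obtain ⟨hx, hB'⟩ := hB
      simp only [energyFrom, levelStep, hx, if_false] at h
      split at h
      · exact le_trans (ih t hB' h) (by omega)
      · rw [energyFrom_none] at h; exact absurd h (by simp)

theorem srcNR_of_forall (x : S) (B : List (A × S)) (hx : x ∉ M.R)
    (h : ∀ z ∈ (B.map Prod.snd).dropLast, z ∉ M.R) : M.SrcNR x B := by
  induction B generalizing x with
  | nil => trivial
  | cons p B ih =>
    cases p with
    | mk a t =>
      cases B with
      | nil => exact ⟨hx, trivial⟩
      | cons q B' =>
        refine ⟨hx, ih t (h t (by simp)) ?_⟩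
        intro z hz
        apply h
        simp only [List.map_cons, List.dropLast_cons₂, List.mem_cons] at hz ⊢
        exact Or.inr hz

end Aux

section Aux2
set_option linter.unusedSectionVars false

variable {S A : Type} [Fintype S] (M : CMDP S A)

/-- Shift a strategy by a fixed initial history. -/
def shiftS (σ : Strat S A) (s : S) (B : List (A × S)) : Strat S A :=
  fun h => σ (s, B ++ h.2)

theorem compatHist_nil (σ : Strat S A) (s : S) : M.CompatHist σ s [] := by
  constructor
  · trivial
  · intro i hi; simp at hi

theorem compatHist_congr {σ σ' : Strat S A} {s : S} {L : List (A × S)}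
    (h : ∀ u, σ (s, u) = σ' (s, u)) : M.CompatHist σ s L ↔ M.CompatHist σ' s L := by
  unfold CompatHist
  constructor <;> rintro ⟨hv, hact⟩ <;> refine ⟨hv, fun i hi => ?_⟩
  · rw [hact i hi, h]
  · rw [hact i hi, h]

theorem compatHist_cons {σ : Strat S A} {s : S} {a : A} {t : S} {C : List (A × S)} :
    M.CompatHist σ s ((a, t) :: C) ↔
      σ (s, []) = a ∧ t ∈ M.Succ s a ∧ M.CompatHist (shiftS σ s [(a, t)]) t C := by
  unfold CompatHist
  constructor
  · rintro ⟨⟨hmem, hvp⟩, hact⟩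
    refine ⟨(hact 0 (by simp)).symm, hmem, hvp, ?_⟩
    intro i hi
    have := hact (i + 1) (by simpa using Nat.succ_lt_succ hi)
    simpa [shiftS] using this
  · rintro ⟨ha, hmem, hvp, hact⟩
    refine ⟨⟨hmem, hvp⟩, ?_⟩
    intro i hi
    cases i with
    | zero => simpa using ha.symm
    | succ i =>
      have := hact i (by simpa using Nat.lt_of_succ_lt_succ hi)
      simpa [shiftS] using this

theorem compatHist_append {σ : Strat S A} {s : S} {B C : List (A × S)} :
    M.CompatHist σ s (B ++ C) ↔
      M.CompatHist σ s B ∧ M.CompatHist (shiftS σ s B) (lastState s B) C := by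
  induction B generalizing σ s with
  | nil =>
    simp only [List.nil_append]
    constructor
    · intro h
      exact ⟨M.compatHist_nil σ s, (M.compatHist_congr (fun u => rfl)).mp h⟩
    · rintro ⟨-, h⟩
      exact (M.compatHist_congr (σ := shiftS σ s []) (fun u => rfl)).mp h
  | cons p B ih =>
    obtain ⟨a, t⟩ := p
    rw [List.cons_append, M.compatHist_cons, ih, M.compatHist_cons, and_assoc]
    have hsh : shiftS (shiftS σ s [(a, t)]) t B = shiftS σ s ((a, t) :: B) := by
      funext h; rfl
    rw [hsh]
    show _ ↔ _
    simp only [lastState]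
    tauto

theorem compatHist_take {σ : Strat S A} {s : S} {L : List (A × S)}
    (h : M.CompatHist σ s L) (n : ℕ) : M.CompatHist σ s (L.take n) := by
  have := (M.compatHist_append (B := L.take n) (C := L.drop n)).mp
    (by rwa [List.take_append_drop])
  exact this.1

theorem prefixSteps_length (ρ : ℕ → S × A) (n : ℕ) : (prefixSteps ρ n).length = n := by
  simp [prefixSteps]

theorem prefixSteps_succ (ρ : ℕ → S × A) (n : ℕ) :
    prefixSteps ρ (n + 1) = prefixSteps ρ n ++ [((ρ n).2, (ρ (n + 1)).1)] := by
  simp [prefixSteps, List.range_succ]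

theorem compatHist_snoc {σ : Strat S A} {s : S} {B : List (A × S)} (h : M.CompatHist σ s B)
    {t : S} (ht : t ∈ M.Succ (lastState s B) (σ (s, B))) :
    M.CompatHist σ s (B ++ [(σ (s, B), t)]) := by
  rw [M.compatHist_append]
  refine ⟨h, ?_⟩
  rw [M.compatHist_cons]
  exact ⟨by simp [shiftS], ht, M.compatHist_nil _ _⟩

theorem compatHist_prefixSteps {σ : Strat S A} {s : S} {ρ : ℕ → S × A}
    (h : M.CompatFrom σ s ρ) (n : ℕ) :
    M.CompatHist σ s (prefixSteps ρ n) ∧ lastState s (prefixSteps ρ n) = (ρ n).1 := by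
  induction n with
  | zero =>
    refine ⟨M.compatHist_nil σ s, ?_⟩
    have : prefixSteps ρ 0 = [] := rfl
    rw [this]
    exact h.2.symm
  | succ n ih =>
    rw [prefixSteps_succ]
    have hact : (ρ n).2 = σ (s, prefixSteps ρ n) := by
      have := h.1.2 n
      rwa [h.2] at this
    have hmem : (ρ (n + 1)).1 ∈ M.Succ (lastState s (prefixSteps ρ n)) (σ (s, prefixSteps ρ n)) := by
      rw [ih.2, ← hact]
      exact h.1.1 n
    constructor
    · rw [hact]
      exact M.compatHist_snoc ih.1 hmem
    · rw [lastState_append]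
      rfl

theorem validPath_index {s : S} {L : List (A × S)} (h : M.ValidPath s L)
    (n : ℕ) (hn : n < L.length) :
    (L.get ⟨n, hn⟩).2 ∈ M.Succ (lastState s (L.take n)) ((L.get ⟨n, hn⟩).1) := by
  induction L generalizing s n with
  | nil => simp at hn
  | cons p L ih =>
    obtain ⟨a, t⟩ := p
    obtain ⟨hmem, hvp⟩ := h
    cases n with
    | zero => exact hmem
    | succ n => exact ih hvp n (by simpa using Nat.lt_of_succ_lt_succ hn)

/-- One extension step for building a run from a history. -/
def nextStep (σ : Strat S A) (s : S) (u : List (A × S)) : A × S :=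
  (σ (s, u), (M.succ_nonempty (lastState s u) (σ (s, u))).choose)

/-- `extHist σ s L n` : the length-`n` canonical history extending/truncating `L`. -/
def extHist (σ : Strat S A) (s : S) (L : List (A × S)) : ℕ → List (A × S)
  | 0 => []
  | n + 1 => if n < L.length then L.take (n + 1)
             else extHist σ s L n ++ [M.nextStep σ s (extHist σ s L n)]

theorem extHist_take (σ : Strat S A) (s : S) (L : List (A × S)) :
    ∀ n, n ≤ L.length → M.extHist σ s L n = L.take n := by
  intro n hn
  cases n with
  | zero => simp [extHist]
  | succ n => rw [extHist, if_pos (by omega)]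

/-- The step appended at stage `n`. -/
def stepOf (σ : Strat S A) (s : S) (L : List (A × S)) (n : ℕ) : A × S :=
  if h : n < L.length then L.get ⟨n, h⟩ else M.nextStep σ s (M.extHist σ s L n)

theorem extHist_succ (σ : Strat S A) (s : S) (L : List (A × S)) (n : ℕ) :
    M.extHist σ s L (n + 1) = M.extHist σ s L n ++ [M.stepOf σ s L n] := by
  rw [extHist, stepOf]
  by_cases h : n < L.length
  · rw [if_pos h, dif_pos h, M.extHist_take σ s L n (by omega), List.take_succ]
    simp [List.getElem?_eq_getElem h]
  · rw [if_neg h, dif_neg h]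

theorem stepOf_fst {σ : Strat S A} {s : S} {L : List (A × S)} (h : M.CompatHist σ s L)
    (n : ℕ) : (M.stepOf σ s L n).1 = σ (s, M.extHist σ s L n) := by
  rw [stepOf]
  by_cases hn : n < L.length
  · rw [dif_pos hn, h.2 n hn, M.extHist_take σ s L n (by omega)]
  · rw [dif_neg hn]
    rfl

theorem stepOf_mem {σ : Strat S A} {s : S} {L : List (A × S)} (h : M.CompatHist σ s L)
    (n : ℕ) :
    (M.stepOf σ s L n).2 ∈ M.Succ (lastState s (M.extHist σ s L n)) (σ (s, M.extHist σ s L n)) := by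
  rw [stepOf]
  by_cases hn : n < L.length
  · rw [dif_pos hn, M.extHist_take σ s L n (by omega), ← h.2 n hn]
    exact M.validPath_index h.1 n hn
  · rw [dif_neg hn]
    exact (M.succ_nonempty (lastState s (M.extHist σ s L n)) (σ (s, M.extHist σ s L n))).choose_spec

theorem exists_run_of_compatHist {σ : Strat S A} {s : S} {L : List (A × S)}
    (h : M.CompatHist σ s L) :
    ∃ ρ, M.CompatFrom σ s ρ ∧ prefixSteps ρ L.length = L ∧
      ∀ n, runState ρ n = lastState s (prefixSteps ρ n) := by
  set ρ : ℕ → S × A := fun n => (lastState s (M.extHist σ s L n), σ (s, M.extHist σ s L n))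
    with hρ
  have hpre : ∀ n, prefixSteps ρ n = M.extHist σ s L n := by
    intro n
    induction n with
    | zero => rfl
    | succ n ih =>
      rw [prefixSteps_succ, ih, M.extHist_succ]
      congr 1
      have h2 : (ρ (n + 1)).1 = (M.stepOf σ s L n).2 := by
        simp only [hρ, M.extHist_succ, lastState_append]
        rfl
      have h1 : (ρ n).2 = (M.stepOf σ s L n).1 := (M.stepOf_fst h n).symm
      rw [h1, h2]
  have hcf : M.CompatFrom σ s ρ := by
    refine ⟨⟨?_, ?_⟩, rfl⟩
    · intro n
      have h2 : (ρ (n + 1)).1 = (M.stepOf σ s L n).2 := by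
        simp only [hρ, M.extHist_succ, lastState_append]
        rfl
      rw [h2]
      exact M.stepOf_mem h n
    · intro n
      show σ (s, M.extHist σ s L n) = σ (runState ρ 0, prefixSteps ρ n)
      rw [hpre n]
      rfl
  refine ⟨ρ, hcf, ?_, fun n => (hpre n).symm ▸ rfl⟩
  rw [hpre, M.extHist_take σ s L L.length le_rfl, List.take_length]

/-- Safety in terms of finite histories. -/
def SafeH (σ : Strat S A) (d : ℕ) (s : S) : Prop :=
  ∀ L, M.CompatHist σ s L → M.energy d s L ≠ none

theorem safeStrat_of_safeH {σ : Strat S A} {d : ℕ} {s : S} (h : M.SafeH σ d s) :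
    M.SafeStrat σ d s := by
  intro ρ hρ i
  rw [hρ.2]
  exact h _ (M.compatHist_prefixSteps hρ i).1

theorem safeH_of_safeStrat {σ : Strat S A} {d : ℕ} {s : S} (h : M.SafeStrat σ d s) :
    M.SafeH σ d s := by
  intro L hL
  obtain ⟨ρ, hcf, hpre, -⟩ := M.exists_run_of_compatHist hL
  have := h ρ hcf L.length
  rwa [hcf.2, hpre] at this

end Aux2

section Aux3
set_option linter.unusedSectionVars false

theorem exists_le_of_iInf_le {ι : Sort*} {f : ι → ℕ∞} {m : ℕ} (h : (⨅ i, f i) ≤ (m : ℕ∞)) :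
    ∃ i, f i ≤ (m : ℕ∞) := by
  by_contra hc
  push_neg at hc
  have h1 : (m : ℕ∞) + 1 ≤ ⨅ i, f i :=
    le_iInf fun i => (ENat.add_one_le_iff (by simp)).mpr (hc i)
  have h2 : (m : ℕ∞) + 1 ≤ (m : ℕ∞) := le_trans h1 h
  have h3 : (m : ℕ∞) < (m : ℕ∞) + 1 := by
    rw [ENat.lt_add_one_iff (by simp)]
  exact absurd h2 (not_le.mpr h3)

theorem exists_le_of_biInf_le {α : Type*} {P : Set α} {g : α → ℕ∞} {m : ℕ}
    (h : (⨅ x ∈ P, g x) ≤ (m : ℕ∞)) : ∃ x ∈ P, g x ≤ (m : ℕ∞) := by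
  rw [iInf_subtype'] at h
  obtain ⟨⟨x, hx⟩, hle⟩ := exists_le_of_iInf_le h
  exact ⟨x, hx, hle⟩

theorem biInf_nat_eq_top {P : Set ℕ} (h : P = ∅) : (⨅ x ∈ P, (x : ℕ∞)) = ⊤ := by
  simp [h]

variable {S A : Type} [Fintype S] (M : CMDP S A)

theorem energy_cons (d : ℕ) (s : S) (a : A) (t : S) (L : List (A × S)) :
    M.energy d s ((a, t) :: L) = M.energyFrom (M.levelStep s a d) t L := rfl

theorem safeH_mono {σ : Strat S A} {d d' : ℕ} {s : S} (h : M.SafeH σ d s) (hdd : d ≤ d') :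
    M.SafeH σ d' s := fun L hL => M.energyFrom_mono_ne hdd s L (h L hL)

theorem safeH_shift {σ : Strat S A} {ℓ : ℕ} {s : S} (h : M.SafeH σ ℓ s) {a : A} {t : S}
    (ha : σ (s, []) = a) (ht : t ∈ M.Succ s a) {m : ℕ} (hm : M.levelStep s a ℓ = some m) :
    M.SafeH (shiftS σ s [(a, t)]) m t := by
  intro L hL
  have hcomp : M.CompatHist σ s ((a, t) :: L) := M.compatHist_cons.mpr ⟨ha, ht, hL⟩
  have := h _ hcomp
  rwa [M.energy_cons, hm] at this

theorem safeH_reload {σ : Strat S A} {d d' : ℕ} {s : S} (hs : s ∈ M.R) (h : M.SafeH σ d s) :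
    M.SafeH σ d' s := by
  intro L hL
  cases L with
  | nil => simp [energy, energyFrom]
  | cons p L =>
    obtain ⟨a, t⟩ := p
    have := h _ hL
    rw [M.energy_cons] at this ⊢
    have hls : M.levelStep s a d = M.levelStep s a d' := by simp [levelStep, hs]
    rwa [← hls]

/-- The index set of `safeVec`. -/
theorem safeVec_eq (s : S) :
    M.safeVec s = ⨅ d ∈ {d : ℕ | d ≤ M.cap ∧ ∃ σ : Strat S A, M.SafeStrat σ d s}, (d : ℕ∞) := rfl

theorem safeVec_le {s : S} {d : ℕ} (hd : d ≤ M.cap) {σ : Strat S A} (hσ : M.SafeStrat σ d s) :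
    M.safeVec s ≤ (d : ℕ∞) := by
  rw [safeVec_eq]
  exact biInf_le _ ⟨hd, σ, hσ⟩

theorem safeVec_le_cap_of_ne_top {s : S} (h : M.safeVec s ≠ ⊤) : M.safeVec s ≤ (M.cap : ℕ∞) := by
  by_contra hc
  push_neg at hc
  apply h
  rw [safeVec_eq, eq_top_iff]
  refine le_iInf fun d => le_iInf fun hd => ?_
  exfalso
  have : M.safeVec s ≤ (d : ℕ∞) := M.safeVec_le hd.1 hd.2.choose_spec
  exact absurd (le_trans this (by exact_mod_cast hd.1)) (not_le.mpr hc)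

theorem safeVec_reload {s : S} (hs : s ∈ M.R) (h : M.safeVec s ≠ ⊤) : M.safeVec s = 0 := by
  have hle : M.safeVec s ≤ (M.cap : ℕ∞) := M.safeVec_le_cap_of_ne_top h
  obtain ⟨d, hd, -⟩ := exists_le_of_biInf_le
    (P := {d : ℕ | d ≤ M.cap ∧ ∃ σ : Strat S A, M.SafeStrat σ d s})
    (g := fun d => (d : ℕ∞)) (by rw [← M.safeVec_eq]; exact hle)
  obtain ⟨hdc, σ, hσ⟩ := hd
  have h0 : M.SafeStrat σ 0 s :=
    M.safeStrat_of_safeH (M.safeH_reload hs (M.safeH_of_safeStrat hσ))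
  have := M.safeVec_le (Nat.zero_le _) h0
  exact le_antisymm (by exact_mod_cast this) zero_le

/-- `trunc2` fixes `safeVec` on any state. -/
theorem trunc2_safeVec (s : S) : M.trunc2 M.safeVec s = M.safeVec s := by
  unfold trunc2
  by_cases htop : M.safeVec s = ⊤
  · rw [htop]; simp
  · have hle : M.safeVec s ≤ (M.cap : ℕ∞) := M.safeVec_le_cap_of_ne_top htop
    rw [if_neg (not_lt.mpr hle)]
    by_cases hs : s ∈ M.R
    · rw [if_pos hs, M.safeVec_reload hs htop]
    · rw [if_neg hs]

end Aux3

section Aux4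
set_option linter.unusedSectionVars false

variable {S A : Type} [Fintype S] (M : CMDP S A)

/-- History-level witness for bounded safe positive reachability. -/
def HWit (T : Set S) (i : ℕ) (s : S) (ℓ : ℕ) : Prop :=
  ℓ ≤ M.cap ∧ ∃ σ L, M.SafeH σ ℓ s ∧ M.CompatHist σ s L ∧ L.length ≤ i ∧ lastState s L ∈ T

/-- History-level witness for safe positive reachability. -/
def HW (T : Set S) (s : S) (ℓ : ℕ) : Prop :=
  ℓ ≤ M.cap ∧ ∃ σ L, M.SafeH σ ℓ s ∧ M.CompatHist σ s L ∧ lastState s L ∈ T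

theorem hwit_iff (T : Set S) (i : ℕ) (s : S) (ℓ : ℕ) :
    (ℓ ≤ M.cap ∧ ∃ σ : Strat S A, M.SafeStrat σ ℓ s ∧
        ∃ ρ, M.CompatFrom σ s ρ ∧ VisitsWithin T i ρ) ↔ M.HWit T i s ℓ := by
  constructor
  · rintro ⟨hcap, σ, hσ, ρ, hρ, j, hj, hjT⟩
    refine ⟨hcap, σ, prefixSteps ρ j, M.safeH_of_safeStrat hσ,
      (M.compatHist_prefixSteps hρ j).1, by rw [prefixSteps_length]; exact hj, ?_⟩
    rw [(M.compatHist_prefixSteps hρ j).2]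
    exact hjT
  · rintro ⟨hcap, σ, L, hσ, hL, hlen, hlast⟩
    obtain ⟨ρ, hcf, hpre, hrs⟩ := M.exists_run_of_compatHist hL
    exact ⟨hcap, σ, M.safeStrat_of_safeH hσ, ρ, hcf, L.length, hlen,
      by rw [hrs, hpre]; exact hlast⟩

theorem hw_iff (T : Set S) (s : S) (ℓ : ℕ) :
    (ℓ ≤ M.cap ∧ ∃ σ : Strat S A, M.SafeStrat σ ℓ s ∧
        ∃ ρ, M.CompatFrom σ s ρ ∧ Visits T ρ) ↔ M.HW T s ℓ := by
  constructor
  · rintro ⟨hcap, σ, hσ, ρ, hρ, j, hjT⟩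
    refine ⟨hcap, σ, prefixSteps ρ j, M.safeH_of_safeStrat hσ,
      (M.compatHist_prefixSteps hρ j).1, ?_⟩
    rw [(M.compatHist_prefixSteps hρ j).2]
    exact hjT
  · rintro ⟨hcap, σ, L, hσ, hL, hlast⟩
    obtain ⟨ρ, hcf, hpre, hrs⟩ := M.exists_run_of_compatHist hL
    exact ⟨hcap, σ, M.safeStrat_of_safeH hσ, ρ, hcf, L.length,
      by rw [hrs, hpre]; exact hlast⟩

theorem safePRBdd_eq_iInf (T : Set S) (i : ℕ) (s : S) :
    M.safePRBdd T i s = ⨅ ℓ ∈ {ℓ : ℕ | M.HWit T i s ℓ}, (ℓ : ℕ∞) := by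
  unfold safePRBdd
  have hset : {ℓ : ℕ | ℓ ≤ M.cap ∧ ∃ σ : Strat S A, M.SafeStrat σ ℓ s ∧
      ∃ ρ, M.CompatFrom σ s ρ ∧ VisitsWithin T i ρ} = {ℓ : ℕ | M.HWit T i s ℓ} :=
    Set.ext fun ℓ => M.hwit_iff T i s ℓ
  rw [hset]

theorem safePR_eq_iInf (T : Set S) (s : S) :
    M.safePR T s = ⨅ ℓ ∈ {ℓ : ℕ | M.HW T s ℓ}, (ℓ : ℕ∞) := by
  unfold safePR
  have hset : {ℓ : ℕ | ℓ ≤ M.cap ∧ ∃ σ : Strat S A, M.SafeStrat σ ℓ s ∧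
      ∃ ρ, M.CompatFrom σ s ρ ∧ Visits T ρ} = {ℓ : ℕ | M.HW T s ℓ} :=
    Set.ext fun ℓ => M.hw_iff T s ℓ
  rw [hset]

theorem safePRBdd_le_of_HWit {T : Set S} {i : ℕ} {s : S} {ℓ : ℕ} (h : M.HWit T i s ℓ) :
    M.safePRBdd T i s ≤ (ℓ : ℕ∞) := by
  rw [M.safePRBdd_eq_iInf]
  exact iInf₂_le ℓ h

/-- Witness analysis: from a safe witness reaching `T`, a good action exists. -/
theorem witness_analysis {T : Set S} {i : ℕ} {s : S} (hsT : s ∉ T) {ℓ : ℕ}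
    (h : M.HWit T (i + 1) s ℓ) :
    ∃ a, M.spr s a (M.safePRBdd T i) ≤ ((if s ∈ M.R then M.cap else ℓ : ℕ) : ℕ∞) := by
  obtain ⟨hcap, σ, L, hσ, hL, hlen, hlast⟩ := h
  cases L with
  | nil => exact absurd hlast hsT
  | cons p L' =>
    obtain ⟨a, t⟩ := p
    obtain ⟨ha, ht, hL'⟩ := M.compatHist_cons.mp hL
    set ℓ' : ℕ := if s ∈ M.R then M.cap else ℓ with hℓ'
    -- the first step does not exhaust the energy
    have h1 : M.energy ℓ s [(a, t)] ≠ none := by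
      have := hσ _ (M.compatHist_take hL 1)
      simpa using this
    have h2 : M.levelStep s a ℓ ≠ none := by
      intro hc
      apply h1
      rw [M.energy_cons, hc, M.energyFrom_none]
    obtain ⟨m, hm⟩ := Option.ne_none_iff_exists'.mp h2
    have hCm : M.C s a ≤ ℓ' ∧ m = ℓ' - M.C s a := by
      by_cases hs : s ∈ M.R
      · rw [levelStep, if_pos hs] at hm
        rw [hℓ', if_pos hs]
        by_cases hcc : M.C s a ≤ M.cap
        · rw [if_pos hcc] at hm
          exact ⟨hcc, by cases hm; rfl⟩
        · rw [if_neg hcc] at hm; cases hm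
      · rw [levelStep, if_neg hs] at hm
        rw [hℓ', if_neg hs]
        by_cases hcc : M.C s a ≤ ℓ
        · rw [if_pos hcc] at hm
          exact ⟨hcc, by cases hm; rfl⟩
        · rw [if_neg hcc] at hm; cases hm
    have hmcap : m ≤ M.cap := by
      rcases hCm with ⟨h3, h4⟩
      by_cases hs : s ∈ M.R
      · rw [hℓ', if_pos hs] at h4; omega
      · rw [hℓ', if_neg hs] at h4; omega
    -- bound for the chosen successor
    have hWt : M.safePRBdd T i t ≤ (m : ℕ∞) := by
      apply M.safePRBdd_le_of_HWit
      exact ⟨hmcap, shiftS σ s [(a, t)], L', M.safeH_shift hσ ha ht hm, hL',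
        by simp only [List.length_cons] at hlen; omega, hlast⟩
    -- bound for the other successors
    have hSV : ∀ t' ∈ M.Succ s a, M.safeVec t' ≤ (m : ℕ∞) := by
      intro t' ht'
      exact M.safeVec_le hmcap
        (M.safeStrat_of_safeH (M.safeH_shift hσ ha ht' hm))
    refine ⟨a, ?_⟩
    have hinner : (⨅ u ∈ M.Succ s a,
        max (M.safePRBdd T i u) (⨆ t' ∈ {t' ∈ M.Succ s a | t' ≠ u}, M.safeVec t')) ≤ (m : ℕ∞) := by
      refine le_trans (iInf₂_le t ht) ?_
      apply max_le hWt
      apply iSup₂_le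
      intro t' ht'
      exact hSV t' ht'.1
    calc M.spr s a (M.safePRBdd T i) ≤ (M.C s a : ℕ∞) + (m : ℕ∞) := by
          unfold spr; exact add_le_add le_rfl hinner
      _ = (ℓ' : ℕ∞) := by
          rw [← Nat.cast_add]
          congr 1
          omega
end Aux4

section Aux5
set_option linter.unusedSectionVars false

variable {S A : Type} [Fintype S] (M : CMDP S A)

/-- Construction: a good action yields a safe witness reaching `T` one step later. -/
theorem construction {T : Set S} {i : ℕ} {s : S} (hsT : s ∉ T) (a : A) (ℓ : ℕ)
    (hℓ : ℓ ≤ M.cap)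
    (h : M.spr s a (M.safePRBdd T i) ≤ ((if s ∈ M.R then M.cap else ℓ : ℕ) : ℕ∞)) :
    M.HWit T (i + 1) s ℓ := by
  set ℓ' : ℕ := if s ∈ M.R then M.cap else ℓ with hℓ'
  have hℓ'cap : ℓ' ≤ M.cap := by rw [hℓ']; split <;> omega
  rw [spr] at h
  set X := ⨅ u ∈ M.Succ s a,
    max (M.safePRBdd T i u) (⨆ t' ∈ {t' ∈ M.Succ s a | t' ≠ u}, M.safeVec t') with hX
  have hC : M.C s a ≤ ℓ' := by
    have h1 : (M.C s a : ℕ∞) ≤ (ℓ' : ℕ∞) := le_trans le_self_add h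
    exact_mod_cast h1
  set m : ℕ := ℓ' - M.C s a with hm
  have hXm : X ≤ (m : ℕ∞) := by
    have heq : ((ℓ' : ℕ) : ℕ∞) = (M.C s a : ℕ∞) + (m : ℕ∞) := by
      rw [← Nat.cast_add]; congr 1; omega
    rw [heq] at h
    exact (WithTop.add_le_add_iff_left (ENat.coe_ne_top _)).mp h
  have hmcap : m ≤ M.cap := by omega
  obtain ⟨t₀, ht₀, hmax⟩ := exists_le_of_biInf_le hXm
  have hWt : M.safePRBdd T i t₀ ≤ (m : ℕ∞) := le_trans (le_max_left _ _) hmax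
  have hSV : ∀ t' ∈ M.Succ s a, t' ≠ t₀ → ∃ σ' : Strat S A, M.SafeH σ' m t' := by
    intro t' ht' hne
    have h1 : M.safeVec t' ≤ (m : ℕ∞) := by
      refine le_trans ?_ (le_trans (le_max_right _ _) hmax)
      exact le_biSup _ (show t' ∈ {t' ∈ M.Succ s a | t' ≠ t₀} from ⟨ht', hne⟩)
    rw [M.safeVec_eq] at h1
    obtain ⟨d, ⟨hdcap, σ', hσ'⟩, hdm⟩ := exists_le_of_biInf_le h1
    exact ⟨σ', M.safeH_mono (M.safeH_of_safeStrat hσ') (by exact_mod_cast hdm)⟩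
  -- witness for t₀
  have hWt' : ∃ ℓ₁ ∈ {ℓ₁ : ℕ | M.HWit T i t₀ ℓ₁}, (ℓ₁ : ℕ∞) ≤ (m : ℕ∞) := by
    apply exists_le_of_biInf_le
    rw [← M.safePRBdd_eq_iInf]
    exact hWt
  obtain ⟨ℓ₁, hℓ₁, hℓ₁m⟩ := hWt'
  obtain ⟨-, σ₀, L₀, hσ₀, hL₀, hlen₀, hlast₀⟩ := hℓ₁
  have hσ₀m : M.SafeH σ₀ m t₀ := M.safeH_mono hσ₀ (by exact_mod_cast hℓ₁m)
  -- the glued strategy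
  classical
  set τ : S → Strat S A := fun u =>
    if u = t₀ then σ₀
    else if hu : ∃ σ' : Strat S A, M.SafeH σ' m u then hu.choose else fun _ => a
    with hτ
  have hτ0 : τ t₀ = σ₀ := by rw [hτ]; simp
  have hτsafe : ∀ u ∈ M.Succ s a, M.SafeH (τ u) m u := by
    intro u hu
    by_cases he : u = t₀
    · subst he; rw [hτ0]; exact hσ₀m
    · have hex : ∃ σ' : Strat S A, M.SafeH σ' m u := hSV u hu he
      rw [hτ]
      simp only [he, if_false, dif_pos hex]
      exact hex.choose_spec
  set σs : Strat S A := fun h =>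
    match h.2 with
    | [] => a
    | (_, u) :: rest => τ u (u, rest)
    with hσs
  have hshift : ∀ (b : A) (u : S), ∀ w, shiftS σs s [(b, u)] (u, w) = τ u (u, w) := by
    intro b u w; rfl
  have hlevel : M.levelStep s a ℓ = some m := by
    rw [levelStep]
    by_cases hs : s ∈ M.R
    · rw [if_pos hs, if_pos (by rw [hℓ', if_pos hs] at hC; exact hC)]
      rw [hℓ', if_pos hs] at hm
      rw [hm]
    · rw [if_neg hs, if_pos (by rw [hℓ', if_neg hs] at hC; exact hC)]
      rw [hℓ', if_neg hs] at hm
      rw [hm]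
  have hsafe : M.SafeH σs ℓ s := by
    intro L hL
    cases L with
    | nil => simp [energy, energyFrom]
    | cons p rest =>
      obtain ⟨b, u⟩ := p
      obtain ⟨hb, hu, hrest⟩ := M.compatHist_cons.mp hL
      have hba : b = a := by rw [← hb]
      subst hba
      have hrest' : M.CompatHist (τ u) u rest :=
        (M.compatHist_congr (fun w => hshift b u w)).mp hrest
      rw [M.energy_cons, hlevel]
      exact hτsafe u hu rest hrest'
  refine ⟨hℓ, σs, (a, t₀) :: L₀, hsafe, ?_, ?_, ?_⟩
  · rw [M.compatHist_cons]
    refine ⟨rfl, ht₀, ?_⟩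
    exact (M.compatHist_congr (fun w => by rw [hshift a t₀ w, hτ0])).mpr hL₀
  · simp only [List.length_cons]; omega
  · exact hlast₀

end Aux5

section Aux6
set_option linter.unusedSectionVars false

variable {S A : Type} [Fintype S] (M : CMDP S A)

theorem safePRBdd_target {T : Set S} {s : S} (hsT : s ∈ T) (i : ℕ) :
    M.safePRBdd T i s = M.safeVec s := by
  apply le_antisymm
  · rw [M.safeVec_eq]
    refine le_iInf₂ fun d hd => ?_
    obtain ⟨hdc, σ, hσ⟩ := hd
    exact M.safePRBdd_le_of_HWit
      ⟨hdc, σ, [], M.safeH_of_safeStrat hσ, M.compatHist_nil σ s, by simp, hsT⟩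
  · rw [M.safePRBdd_eq_iInf]
    refine le_iInf₂ fun ℓ hℓ => ?_
    obtain ⟨hc, σ, L, hσ, -, -, -⟩ := hℓ
    exact M.safeVec_le hc (M.safeStrat_of_safeH hσ)

theorem safePRBdd_zero_nontarget {T : Set S} {s : S} (hsT : s ∉ T) :
    M.safePRBdd T 0 s = ⊤ := by
  rw [M.safePRBdd_eq_iInf]
  refine le_antisymm le_top (le_iInf₂ fun ℓ hℓ => ?_)
  obtain ⟨-, σ, L, -, -, hlen, hlast⟩ := hℓ
  rw [Nat.le_zero, List.length_eq_zero_iff] at hlen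
  subst hlen
  exact absurd hlast hsT

theorem yTvec_eq_safePRBdd_zero (T : Set S) : M.yTvec T = M.safePRBdd T 0 := by
  funext s
  unfold yTvec
  by_cases hsT : s ∈ T
  · rw [if_pos hsT, M.safePRBdd_target hsT]
  · rw [if_neg hsT, M.safePRBdd_zero_nontarget hsT]

theorem opB_safePRBdd (T : Set S) (i : ℕ) :
    M.opB T (M.safePRBdd T i) = M.safePRBdd T (i + 1) := by
  funext s
  show M.trunc2 (M.opA T (M.safePRBdd T i)) s = _
  by_cases hsT : s ∈ T
  · have h1 : M.trunc2 (M.opA T (M.safePRBdd T i)) s = M.trunc2 M.safeVec s := by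
      unfold trunc2 opA
      rw [if_pos hsT]
    rw [h1, M.trunc2_safeVec, M.safePRBdd_target hsT]
  · set Q := ⨅ a : A, M.spr s a (M.safePRBdd T i) with hQ
    have htr : M.trunc2 (M.opA T (M.safePRBdd T i)) s
        = if (M.cap : ℕ∞) < Q then ⊤ else if s ∈ M.R then 0 else Q := by
      unfold trunc2 opA
      rw [if_neg hsT]
    rw [htr]
    by_cases hQc : Q ≤ (M.cap : ℕ∞)
    · rw [if_neg (not_lt.mpr hQc)]
      by_cases hs : s ∈ M.R
      · rw [if_pos hs]
        symm
        refine le_antisymm ?_ zero_le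
        obtain ⟨a, ha⟩ := exists_le_of_iInf_le (m := M.cap) hQc
        have h0 : M.HWit T (i + 1) s 0 :=
          M.construction hsT a 0 (Nat.zero_le _) (by rw [if_pos hs]; exact ha)
        simpa using M.safePRBdd_le_of_HWit h0
      · rw [if_neg hs]
        have hQtop : Q ≠ ⊤ := ne_top_of_le_ne_top (ENat.coe_ne_top _) hQc
        have hq : (Q.toNat : ℕ∞) = Q := ENat.coe_toNat hQtop
        apply le_antisymm
        · rw [M.safePRBdd_eq_iInf]
          refine le_iInf₂ fun ℓ hℓ => ?_
          obtain ⟨a, ha⟩ := M.witness_analysis hsT hℓ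
          rw [if_neg hs] at ha
          exact le_trans (iInf_le _ a) ha
        · obtain ⟨a, ha⟩ := exists_le_of_iInf_le (m := Q.toNat) (by rw [hq])
          have hqcap : Q.toNat ≤ M.cap := by
            have h2 : (Q.toNat : ℕ∞) ≤ (M.cap : ℕ∞) := by rw [hq]; exact hQc
            exact_mod_cast h2
          have h3 : M.HWit T (i + 1) s Q.toNat :=
            M.construction hsT a Q.toNat hqcap (by rw [if_neg hs]; exact ha)
          calc M.safePRBdd T (i + 1) s ≤ (Q.toNat : ℕ∞) := M.safePRBdd_le_of_HWit h3
            _ = Q := hq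
    · push_neg at hQc
      rw [if_pos hQc]
      symm
      rw [M.safePRBdd_eq_iInf]
      refine le_antisymm le_top (le_iInf₂ fun ℓ hℓ => ?_)
      exfalso
      obtain ⟨a, ha⟩ := M.witness_analysis hsT hℓ
      have hcast : ((if s ∈ M.R then M.cap else ℓ : ℕ) : ℕ∞) ≤ (M.cap : ℕ∞) := by
        have h4 := hℓ.1
        have h5 : (if s ∈ M.R then M.cap else ℓ : ℕ) ≤ M.cap := by split <;> omega
        exact_mod_cast h5
      exact absurd (le_trans (iInf_le _ a) (le_trans ha hcast)) (not_le.mpr hQc)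

end Aux6

section Aux7
set_option linter.unusedSectionVars false

theorem exists_dup {α : Type*} (L : List α) (h : ¬ L.Nodup) :
    ∃ l1 x l2 l3, L = l1 ++ x :: (l2 ++ x :: l3) := by
  induction L with
  | nil => exact absurd List.nodup_nil h
  | cons a L ih =>
    by_cases ha : a ∈ L
    · obtain ⟨l2', l3', hl⟩ := List.append_of_mem ha
      exact ⟨[], a, l2', l3', by simp [hl]⟩
    · have hnd : ¬ L.Nodup := by
        intro hc
        exact h (List.nodup_cons.mpr ⟨ha, hc⟩)
      obtain ⟨l1, x, l2, l3, hl⟩ := ih hnd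
      exact ⟨a :: l1, x, l2, l3, by simp [hl]⟩

variable {S A : Type} [Fintype S] (M : CMDP S A)

/-- A state sequence contains a removable cycle. -/
def Good (Z : List S) : Prop :=
  ∃ (P mid Q : List S) (x : S), Z = P ++ x :: (mid ++ x :: Q) ∧
    (x ∈ M.R ∨ (x ∉ M.R ∧ ∀ z ∈ mid, z ∉ M.R))

theorem split_first_reload (Z : List S) :
    (∀ z ∈ Z, z ∉ M.R) ∨ ∃ P x Q, Z = P ++ x :: Q ∧ x ∈ M.R ∧ ∀ p ∈ P, p ∉ M.R := by
  induction Z with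
  | nil => exact Or.inl (by simp)
  | cons z Z ih =>
    by_cases hz : z ∈ M.R
    · exact Or.inr ⟨[], z, Z, by simp, hz, by simp⟩
    · rcases ih with h | ⟨P, x, Q, hZ, hx, hP⟩
      · refine Or.inl ?_
        intro w hw
        rcases List.mem_cons.mp hw with h1 | h1
        · subst h1; exact hz
        · exact h w h1
      · refine Or.inr ⟨z :: P, x, Q, by simp [hZ], hx, ?_⟩
        intro p hp
        rcases List.mem_cons.mp hp with h1 | h1
        · subst h1; exact hz
        · exact hP p h1

theorem nodup_of_not_good_nr {Z : List S} (h : ¬ M.Good Z) {P : List S} {W : List S}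
    (hZ : Z = P ++ W) (hP : ∀ p ∈ P, p ∉ M.R) : P.Nodup := by
  by_contra hnd
  obtain ⟨l1, x, l2, l3, hl⟩ := exists_dup P hnd
  apply h
  refine ⟨l1, l2, l3 ++ W, x, ?_, Or.inr ⟨?_, ?_⟩⟩
  · rw [hZ, hl]; simp
  · exact hP x (by rw [hl]; simp)
  · intro z hz
    exact hP z (by rw [hl]; simp [hz])

/-- Cardinality bound for non-reload nodup lists. -/
theorem length_le_of_nodup_nr {P : List S} (hnd : P.Nodup) (hP : ∀ p ∈ P, p ∉ M.R) :
    P.length ≤ Fintype.card S - M.R.ncard := by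
  classical
  have h1 : P.toFinset.card = P.length := List.toFinset_card_of_nodup hnd
  have h2 : P.toFinset ⊆ Finset.univ.filter (· ∉ M.R) := by
    intro z hz
    simp only [Finset.mem_filter, Finset.mem_univ, true_and]
    exact hP z (List.mem_toFinset.mp hz)
  have h3 : (Finset.univ.filter (· ∉ M.R)).card = Fintype.card S - M.R.ncard := by
    have h4 : (Finset.univ.filter (· ∈ M.R)).card + (Finset.univ.filter (· ∉ M.R)).card
        = Fintype.card S := by
      rw [Finset.card_filter_add_card_filter_not]
      rfl
    have h5 : (Finset.univ.filter (· ∈ M.R)).card = M.R.ncard := by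
      rw [Set.ncard_eq_toFinset_card']
      congr 1
      ext z
      simp [Set.mem_toFinset]
    omega
  calc P.length = P.toFinset.card := h1.symm
    _ ≤ _ := Finset.card_le_card h2
    _ = _ := by rw [h3]

theorem good_aux (n : ℕ) : ∀ (R' : Finset S) (Z : List S), R'.card ≤ n →
    (∀ z ∈ Z, z ∈ M.R → z ∈ R') → ¬ M.Good Z →
    Z.length ≤ R'.card * (Fintype.card S - M.R.ncard + 1) + (Fintype.card S - M.R.ncard) := by
  set c := Fintype.card S - M.R.ncard with hc
  induction n with
  | zero =>
    intro R' Z hcard hmem hng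
    rcases M.split_first_reload Z with hnr | ⟨P, x, Q, hZ, hx, hP⟩
    · have hnd : Z.Nodup := M.nodup_of_not_good_nr hng (W := []) (by simp) hnr
      have := M.length_le_of_nodup_nr hnd hnr
      omega
    · exfalso
      have : x ∈ R' := hmem x (by rw [hZ]; simp) hx
      have := Finset.card_pos.mpr ⟨x, this⟩
      omega
  | succ n ih =>
    intro R' Z hcard hmem hng
    rcases M.split_first_reload Z with hnr | ⟨P, x, Q, hZ, hx, hP⟩
    · have hnd : Z.Nodup := M.nodup_of_not_good_nr hng (W := []) (by simp) hnr
      have := M.length_le_of_nodup_nr hnd hnr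
      have : 0 ≤ R'.card * (c + 1) := Nat.zero_le _
      omega
    · have hxR' : x ∈ R' := hmem x (by rw [hZ]; simp) hx
      have hPnd : P.Nodup := M.nodup_of_not_good_nr hng hZ hP
      have hPlen : P.length ≤ c := M.length_le_of_nodup_nr hPnd hP
      have hxQ : x ∉ Q := by
        intro hxQmem
        obtain ⟨Q1, Q2, hQ⟩ := List.append_of_mem hxQmem
        exact hng ⟨P, Q1, Q2, x, by rw [hZ, hQ], Or.inl hx⟩
      have hQng : ¬ M.Good Q := by
        rintro ⟨P', mid, Q', y, hQeq, hy⟩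
        exact hng ⟨P ++ x :: P', mid, Q', y, by rw [hZ, hQeq]; simp, hy⟩
      have hQmem : ∀ z ∈ Q, z ∈ M.R → z ∈ R'.erase x := by
        intro z hz hzR
        rw [Finset.mem_erase]
        refine ⟨?_, hmem z (by rw [hZ]; simp [hz]) hzR⟩
        intro he
        subst he
        exact hxQ hz
      have hQcard : (R'.erase x).card ≤ n := by
        have := Finset.card_erase_of_mem hxR'
        have := Finset.card_pos.mpr ⟨x, hxR'⟩
        omega
      have hQlen : Q.length ≤ (R'.erase x).card * (c + 1) + c := ih (R'.erase x) Q hQcard hQmem hQng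
      rw [Finset.card_erase_of_mem hxR'] at hQlen
      have hZlen : Z.length = P.length + 1 + Q.length := by rw [hZ]; simp; omega
      have hec : (R'.erase x).card = R'.card - 1 := Finset.card_erase_of_mem hxR'
      have hpos : 1 ≤ R'.card := Finset.card_pos.mpr ⟨x, hxR'⟩
      have key : (R'.card - 1) * (c + 1) + (c + 1) = R'.card * (c + 1) := by
        have : R'.card - 1 + 1 = R'.card := by omega
        calc (R'.card - 1) * (c + 1) + (c + 1) = (R'.card - 1 + 1) * (c + 1) := by ring
          _ = R'.card * (c + 1) := by rw [this]
      omega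

theorem good_of_long {Z : List S}
    (h : M.R.ncard * (Fintype.card S - M.R.ncard + 1) + (Fintype.card S - M.R.ncard) < Z.length) :
    M.Good Z := by
  classical
  by_contra hng
  have hmem : ∀ z ∈ Z, z ∈ M.R → z ∈ M.R.toFinset := by
    intro z _ hz
    exact Set.mem_toFinset.mpr hz
  have hcard : M.R.toFinset.card = M.R.ncard := (Set.ncard_eq_toFinset_card' _).symm
  have := M.good_aux M.R.toFinset.card M.R.toFinset Z le_rfl hmem hng
  rw [hcard] at this
  omega

end Aux7

section Aux8
set_option linter.unusedSectionVars false

theorem getElem_append_cons' {α : Type*} (P : List α) (x : α) (W : List α) :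
    (P ++ x :: W)[P.length]'(by simp) = x := by
  induction P with
  | nil => rfl
  | cons p P ih => simpa using ih

theorem drop_append_cons' {α : Type*} (P : List α) (x : α) (W : List α) :
    (P ++ x :: W).drop (P.length + 1) = W := by
  induction P with
  | nil => rfl
  | cons p P ih => simpa using ih

theorem take_append_cons' {α : Type*} (P : List α) (x : α) (W : List α) :
    (P ++ x :: W).take (P.length + 1) = P ++ [x] := by
  induction P with
  | nil => rfl
  | cons p P ih => simpa using ih

theorem getElem_append_cons'' {α : Type*} (P : List α) (x : α) (W : List α) (i : ℕ)
    (hi : i = P.length) (h : i < (P ++ x :: W).length) : (P ++ x :: W)[i]'h = x := by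
  subst hi
  exact getElem_append_cons' P x W

variable {S A : Type} [Fintype S] (M : CMDP S A)

theorem lastState_take (L : List (A × S)) (s : S) (n : ℕ) (h : n ≤ L.length) :
    lastState s (L.take n) = (s :: L.map Prod.snd)[n]'(by simp; omega) := by
  induction L generalizing s n with
  | nil =>
    have : n = 0 := by simpa using h
    subst this
    rfl
  | cons p L ih =>
    obtain ⟨a, t⟩ := p
    cases n with
    | zero => rfl
    | succ m =>
      simp only [List.take_succ_cons, List.map_cons]
      have hm : m ≤ L.length := by simpa using h
      have := ih t m hm
      simpa [lastState] using this

theorem compatHist_congr_take {σ σ' : Strat S A} {s : S} {L : List (A × S)}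
    (h : ∀ i < L.length, σ (s, L.take i) = σ' (s, L.take i)) :
    M.CompatHist σ s L ↔ M.CompatHist σ' s L := by
  unfold CompatHist
  constructor <;> rintro ⟨hv, hact⟩ <;> refine ⟨hv, fun i hi => ?_⟩
  · rw [hact i hi, h i hi]
  · rw [hact i hi, ← h i hi]

theorem surgery {T : Set S} {s : S} {ℓ : ℕ} {σ : Strat S A} {L : List (A × S)}
    (hσ : M.SafeH σ ℓ s) (hL : M.CompatHist σ s L) (hlast : lastState s L ∈ T)
    (hgood : M.Good (s :: L.map Prod.snd)) :
    ∃ σ' L', M.SafeH σ' ℓ s ∧ M.CompatHist σ' s L' ∧ lastState s L' ∈ T ∧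
      L'.length < L.length := by
  classical
  obtain ⟨P, mid, Q, x, hZ, hx⟩ := hgood
  set j := P.length with hj
  set k := j + mid.length + 1 with hk
  have hlenZ : L.length + 1 = P.length + (mid.length + (Q.length + 2)) := by
    have := congrArg List.length hZ
    simp at this; omega
  have hkL : k ≤ L.length := by omega
  set A₁ : List (A × S) := L.take j with hA₁
  set A₂ : List (A × S) := (L.drop j).take (mid.length + 1) with hA₂
  set A₃ : List (A × S) := L.drop k with hA₃
  have h12 : A₁ ++ A₂ = L.take k := by
    rw [hA₁, hA₂, ← List.take_add]
    congr 1
  have hsplit : L = (A₁ ++ A₂) ++ A₃ := by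
    rw [h12, hA₃, List.take_append_drop]
  have hA1len : A₁.length = j := by
    rw [hA₁, List.length_take]
    omega
  have hA12len : (A₁ ++ A₂).length = k := by
    rw [h12, List.length_take]
    omega
  have hA2len : A₂.length = mid.length + 1 := by
    have := congrArg List.length hsplit
    simp only [List.length_append] at this
    rw [hA₃, List.length_drop] at this
    omega
  have hx1 : lastState s A₁ = x := by
    rw [hA₁, lastState_take L s j (by omega)]
    have hZ' : s :: L.map Prod.snd = P ++ x :: (mid ++ x :: Q) := hZ
    rw [List.getElem_of_eq hZ' (by simp; omega)]
    exact getElem_append_cons' P x _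
  have hx2 : lastState s (A₁ ++ A₂) = x := by
    have h' : A₁ ++ A₂ = L.take k := h12
    rw [h', lastState_take L s k (by omega)]
    have hZ' : s :: L.map Prod.snd = (P ++ x :: mid) ++ x :: Q := by
      rw [hZ]; simp
    rw [List.getElem_of_eq hZ' (by simp; omega)]
    exact getElem_append_cons'' _ x _ k (by simp; omega) _
  have hA2snd : A₂.map Prod.snd = mid ++ [x] := by
    have h1 : (L.map Prod.snd).drop j = mid ++ x :: Q := by
      have h2 : (s :: L.map Prod.snd).drop (j + 1) = (L.map Prod.snd).drop j := rfl
      rw [← h2, hZ]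
      exact drop_append_cons' P x _
    rw [hA₂, List.map_take, List.map_drop, h1]
    exact take_append_cons' mid x Q
  -- the surgered strategy
  set Φ : List (A × S) → List (A × S) := fun u =>
    if A₁ <+: u then A₁ ++ A₂ ++ u.drop A₁.length else u with hΦ
  set σ' : Strat S A := fun h => σ (s, Φ h.2) with hσ'
  have hΦpre : ∀ v : List (A × S), Φ (A₁ ++ v) = (A₁ ++ A₂) ++ v := by
    intro v
    rw [hΦ]
    simp only [List.prefix_append, if_pos, List.drop_left]
  have hshift' : shiftS σ' s A₁ = shiftS σ s (A₁ ++ A₂) := by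
    funext h
    show σ' (s, A₁ ++ h.2) = σ (s, (A₁ ++ A₂) ++ h.2)
    rw [hσ']
    simp only
    rw [hΦpre]
  have hLsplit : M.CompatHist σ s ((A₁ ++ A₂) ++ A₃) := by rwa [← hsplit]
  have hcompat12 : M.CompatHist σ s (A₁ ++ A₂) := (M.compatHist_append.mp hLsplit).1
  have hcompat3 : M.CompatHist (shiftS σ s (A₁ ++ A₂)) x A₃ := by
    have := (M.compatHist_append.mp hLsplit).2
    rwa [hx2] at this
  -- S1: compatible histories map to compatible histories
  have hS1 : ∀ u, M.CompatHist σ' s u → M.CompatHist σ s (Φ u) := by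
    intro u hu
    by_cases hp : A₁ <+: u
    · obtain ⟨v, rfl⟩ := hp
      rw [hΦpre]
      rw [M.compatHist_append]
      refine ⟨hcompat12, ?_⟩
      have h2 := (M.compatHist_append.mp hu).2
      rw [hx1, hshift'] at h2
      rwa [hx2]
    · have hΦu : Φ u = u := if_neg hp
      rw [hΦu]
      refine (M.compatHist_congr_take ?_).mpr hu
      intro i hi
      have hnp : ¬ A₁ <+: u.take i := fun hc => hp (hc.trans (List.take_prefix i u))
      show σ (s, u.take i) = σ (s, Φ (u.take i))
      rw [hΦ]
      simp only [if_neg hnp]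
  -- S2: energy transfer
  have hS2 : ∀ u, M.energy ℓ s (Φ u) ≠ none → M.energy ℓ s u ≠ none := by
    intro u h
    by_cases hp : A₁ <+: u
    · obtain ⟨v, rfl⟩ := hp
      rw [hΦpre] at h
      unfold energy at h ⊢
      rw [M.energyFrom_append _ _ (A₁ ++ A₂) v, hx2] at h
      rw [M.energyFrom_append _ _ A₁ v, hx1]
      set e₂ := M.energyFrom (some ℓ) s (A₁ ++ A₂) with he₂
      set e₁ := M.energyFrom (some ℓ) s A₁ with he₁
      have he₂n : e₂ ≠ none := by
        intro hc
        rw [hc, M.energyFrom_none] at h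
        exact h rfl
      obtain ⟨m₂, hm₂⟩ := Option.ne_none_iff_exists'.mp he₂n
      have he21 : e₂ = M.energyFrom e₁ x A₂ := by
        rw [he₂, he₁, M.energyFrom_append _ _ A₁ A₂, hx1]
      have he₁n : e₁ ≠ none := by
        intro hc
        rw [he21, hc, M.energyFrom_none] at hm₂
        cases hm₂
      obtain ⟨m₁, hm₁⟩ := Option.ne_none_iff_exists'.mp he₁n
      rw [hm₂] at h
      rw [hm₁]
      rcases hx with hxR | ⟨hxnR, hmidnR⟩
      · exact M.energyFrom_reload_ne x hxR m₂ m₁ v h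
      · have hsrc : M.SrcNR x A₂ := by
          apply M.srcNR_of_forall x A₂ hxnR
          rw [hA2snd, List.dropLast_concat]
          exact hmidnR
        have hm21 : m₂ ≤ m₁ := by
          apply M.energyFrom_srcNR_le x A₂ hsrc
          rw [← hm₁, ← he21]
          exact hm₂
        exact M.energyFrom_mono_ne hm21 x v h
    · have hΦu : Φ u = u := if_neg hp
      rwa [hΦu] at h
  -- safety of σ'
  have hsafe' : M.SafeH σ' ℓ s := fun u hu => hS2 u (hσ _ (hS1 u hu))
  -- the shortened witness
  refine ⟨σ', A₁ ++ A₃, hsafe', ?_, ?_, ?_⟩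
  · rw [M.compatHist_append]
    constructor
    · refine (M.compatHist_congr_take ?_).mp (M.compatHist_take hL j)
      intro i hi
      rw [hA1len] at hi
      have hnp : ¬ A₁ <+: A₁.take i := by
        intro hc
        have h5 := hc.length_le
        have h6 : (List.take i A₁).length ≤ i := by
          rw [List.length_take]
          omega
        omega
      show σ (s, A₁.take i) = σ (s, Φ (A₁.take i))
      rw [hΦ]
      simp only [if_neg hnp]
    · rw [hx1, hshift']
      exact hcompat3
  · rw [lastState_append, hx1]
    have : lastState s L = lastState x A₃ := by
      rw [hsplit, lastState_append, hx2]
    rwa [← this]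
  · have h1 : (A₁ ++ A₃).length = A₁.length + A₃.length := List.length_append
    have h2 : L.length = A₁.length + A₂.length + A₃.length := by
      rw [hsplit]
      simp only [List.length_append]
    omega

end Aux8

section Aux9
set_option linter.unusedSectionVars false

variable {S A : Type} [Fintype S] (M : CMDP S A)

theorem shorten {T : Set S} {s : S} {ℓ : ℕ} :
    ∀ (n : ℕ) (σ : Strat S A) (L : List (A × S)), L.length ≤ n → M.SafeH σ ℓ s →
      M.CompatHist σ s L → lastState s L ∈ T → ℓ ≤ M.cap →
      M.HWit T (M.R.ncard + (M.R.ncard + 1) * (Fintype.card S - M.R.ncard + 1)) s ℓ := by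
  set r := M.R.ncard with hr
  set c := Fintype.card S - M.R.ncard with hc
  set K := r + (r + 1) * (c + 1) with hK
  intro n
  induction n with
  | zero =>
    intro σ L hlen hσ hL hlast hcap
    exact ⟨hcap, σ, L, hσ, hL, by omega, hlast⟩
  | succ n ih =>
    intro σ L hlen hσ hL hlast hcap
    by_cases hsmall : L.length ≤ K
    · exact ⟨hcap, σ, L, hσ, hL, hsmall, hlast⟩
    · have hgood : M.Good (s :: L.map Prod.snd) := by
        apply M.good_of_long
        have hexp : (r + 1) * (c + 1) = r * (c + 1) + (c + 1) := by ring
        simp only [List.length_cons, List.length_map]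
        have h7 : r * (c + 1) = M.R.ncard * (Fintype.card S - M.R.ncard + 1) := rfl
        omega
      obtain ⟨σ'', L'', hσ'', hL'', hlast'', hshort⟩ := M.surgery hσ hL hlast hgood
      exact ih σ'' L'' (by omega) hσ'' hL'' hlast'' hcap

theorem opB_iterate_eq (T : Set S) (n : ℕ) :
    (M.opB T)^[n] (M.yTvec T) = M.safePRBdd T n := by
  induction n with
  | zero =>
    rw [Function.iterate_zero_apply, M.yTvec_eq_safePRBdd_zero]
  | succ n ih =>
    rw [Function.iterate_succ_apply', ih, M.opB_safePRBdd]

theorem main_result (T : Set S) :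
    (M.opB T)^[M.R.ncard + (M.R.ncard + 1) * (Fintype.card S - M.R.ncard + 1)]
        (M.yTvec T) = M.safePR T := by
  rw [M.opB_iterate_eq]
  funext s
  apply le_antisymm
  · rw [M.safePR_eq_iInf]
    refine le_iInf₂ fun ℓ hℓ => ?_
    obtain ⟨hcap, σ, L, hσ, hL, hlast⟩ := hℓ
    exact M.safePRBdd_le_of_HWit (M.shorten L.length σ L le_rfl hσ hL hlast hcap)
  · rw [M.safePR_eq_iInf, M.safePRBdd_eq_iInf]
    refine le_iInf₂ fun ℓ hℓ => ?_
    obtain ⟨hcap, σ, L, hσ, hL, -, hlast⟩ := hℓ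
    exact iInf₂_le ℓ ⟨hcap, σ, L, hσ, hL, hlast⟩

end Aux9
end CMDP
open CMDP in
/-- After `K = |R| + (|R|+1)·(|S|−|R|+1)` iterations, `B` reaches the safe
positive reachability vector. -/
theorem opB_iterate_K_eq_safePR {S A : Type} [Fintype S] (M : CMDP S A)
    (T : Set S) :
    (M.opB T)^[M.R.ncard + (M.R.ncard + 1) * (Fintype.card S - M.R.ncard + 1)]
        (M.yTvec T) = M.safePR T := M.main_result T
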